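/- Let λ ≥ μ be infinite regular cardinals, κ a cardinal, and (f_β)_{β<κ} a family of functions from λ to μ. If for every function g : κ → μ there exists a finite set F ⊆ κ such that the intersection ⋂_{β∈F} f_β⁻¹([0, g(β))) has cardinality < λ, then for every ultrafilter D uniform over λ there exists β < κ such that the pushforward ultrafilter f_β(D) is uniform over μ. -/

import Mathlib

open Cardinal Set

/-- An ultrafilter over a cardinal `l` (realized as the type `l.ord.ToType`)
is *uniform* if every member has cardinality `l`. -/
def IsUniformUltrafilter (l : Cardinal) (D : Ultrafilter l.ord.ToType) : Prop :=
  ∀ s ∈ D, #s = l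

/-- Any subset of `m.ord.ToType` of cardinality `< m` (for `m` regular) has a
strict upper bound. -/
theorem bounded_of_mk_lt (m : Cardinal) (hm : m.IsRegular) (t : Set m.ord.ToType)
    (ht : #t < m) : ∃ g : m.ord.ToType, t ⊆ Set.Iio g := by
  have e := Ordinal.ToType.mk (o := m.ord)
  have hlim : Order.IsSuccLimit m.ord := Cardinal.isSuccLimit_ord hm.aleph0_le
  have hsup : (⨆ x : t, ((e.symm x.1).1 + 1)) < m.ord := by
    apply Ordinal.iSup_lt_ord
    · rwa [hm.cof_eq]
    · intro i
      exact hlim.add_one_lt (e.symm i.1).2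
  refine ⟨e ⟨_, hsup⟩, fun x hx => ?_⟩
  have hlt : (e.symm x).1 < (⨆ y : t, ((e.symm y.1).1 + 1)) := by
    calc (e.symm x).1 < (e.symm x).1 + 1 := lt_add_one _
    _ ≤ _ := le_ciSup (Ordinal.bddAbove_range _) (⟨x, hx⟩ : t)
  have : e.symm x < (⟨_, hsup⟩ : Set.Iio m.ord) := hlt
  have := e.lt_iff_lt.mpr this
  simpa using this

/-- If for every `g : κ → μ` some finite intersection
`⋂_{β ∈ F} f_β⁻¹ [0, g β)` has cardinality `< λ`, then for every ultrafilter `D`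
uniform over `λ` some pushforward `f_β(D)` is uniform over `μ`. -/
theorem stmt0 (l m : Cardinal) (hl : l.IsRegular) (hm : m.IsRegular) (hml : m ≤ l)
    {ι : Type*} (f : ι → l.ord.ToType → m.ord.ToType)
    (h : ∀ g : ι → m.ord.ToType, ∃ F : Finset ι,
      #(↥(⋂ β ∈ F, f β ⁻¹' Set.Iio (g β))) < l) :
    ∀ D : Ultrafilter l.ord.ToType, IsUniformUltrafilter l D →
      ∃ β : ι, ∀ t ∈ Ultrafilter.map (f β) D, #t = m := by
  intro D hD
  by_contra hcon
  push_neg at hcon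
  -- for each β choose a small set in the pushforward, hence a bound g β
  have key : ∀ β : ι, ∃ g : m.ord.ToType, f β ⁻¹' Set.Iio g ∈ D := by
    intro β
    obtain ⟨t, htD, htm⟩ := hcon β
    have htle : #t ≤ m := by
      calc #t ≤ #(m.ord.ToType) := mk_set_le t
      _ = m := by rw [Cardinal.mk_toType, Cardinal.card_ord]
    obtain ⟨g, hg⟩ := bounded_of_mk_lt m hm t (lt_of_le_of_ne htle htm)
    refine ⟨g, ?_⟩
    have : f β ⁻¹' t ∈ D := (Ultrafilter.mem_map).mp htD
    exact D.toFilter.mem_of_superset this (fun x hx => hg hx)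
  choose g hg using key
  obtain ⟨F, hF⟩ := h g
  have hmem : (⋂ β ∈ F, f β ⁻¹' Set.Iio (g β)) ∈ D := by
    exact Filter.biInter_finset_mem F |>.mpr fun β _ => hg β
  have := hD _ hmem
  rw [this] at hF
  exact lt_irrefl l hF
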